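/- Let a, b ∈ 𝔹² with |a| = |b|, a ≠ b. Then the visual angle metric satisfies v(a,b) = 2·arctan(|a−b|/(2 − |a+b|)), where v(a,b) = sup{∠(a,z,b) : |z| = 1}. -/

import Mathlib

open Complex EuclideanGeometry
open scoped InnerProductSpace

/-- The visual angle metric of the unit disk. -/
noncomputable def vam (a b : ℂ) : ℝ :=
  sSup {θ : ℝ | ∃ z : ℂ, ‖z‖ = 1 ∧ θ = EuclideanGeometry.angle a z b}

lemma vam_sq_ineq (x y u : ℝ) (hx : 0 < x) (hu1 : u ≤ 1)
    (hr : x^2 + y^2 ≤ 1) (hN : 1 + x^2 - 2*x*u - y^2 ≤ 0) :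
    (1 + x^2 - 2*x*u - y^2)^2 * ((1-x)^2 + y^2)^2
      ≤ ((1-x)^2 - y^2)^2 * ((1 + x^2 + y^2 - 2*x*u)^2 - 4*y^2*(1-u^2)) := by
  have hT : 0 ≤ 2*x*(1-u) := by
    have : 0 ≤ 1 - u := by linarith
    positivity
  have heT : 2*x*(1-u) ≤ y^2 - (1-x)^2 := by nlinarith
  have he0 : 0 ≤ y^2 - (1-x)^2 := le_trans hT heT
  have hx1 : x ≤ 1 := by nlinarith
  rcases he0.eq_or_lt with he | he
  · have hT0 : 2*x*(1-u) = 0 := le_antisymm (by linarith) hT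
    have hN0 : 1 + x^2 - 2*x*u - y^2 = 0 := by nlinarith
    have hK0 : (1-x)^2 - y^2 = 0 := by linarith
    rw [hN0, hK0]
    norm_num
  · have hS : 0 ≤ 1 - x^2 - y^2 := by linarith
    have key : (y^2 - (1-x)^2) * (4*x^2) *
        (((1-x)^2 - y^2)^2 * ((1 + x^2 + y^2 - 2*x*u)^2 - 4*y^2*(1-u^2))
          - (1 + x^2 - 2*x*u - y^2)^2 * ((1-x)^2 + y^2)^2)
        = 16*x*y^2*(y^2 - (1-x)^2) *
            ((2*x*(1-u)) * ((y^2 - (1-x)^2) - 2*x*(1-u)) * (1-x) * (1 - x^2 - y^2))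
          + 4*y^2*(y^2 - (1-x)^2) * ((2*x*(1-u))^2 * (1 - x^2 - y^2)^2) := by
      ring
    have h1 : 0 ≤ 16*x*y^2*(y^2 - (1-x)^2) *
        ((2*x*(1-u)) * ((y^2 - (1-x)^2) - 2*x*(1-u)) * (1-x) * (1 - x^2 - y^2)) := by
      have e1 : 0 ≤ (y^2 - (1-x)^2) - 2*x*(1-u) := by linarith
      have e2 : 0 ≤ (1:ℝ) - x := by linarith
      have e3 : 0 ≤ 16*x*y^2*(y^2 - (1-x)^2) := by positivity
      exact mul_nonneg e3 (mul_nonneg (mul_nonneg (mul_nonneg hT e1) e2) hS)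
    have h2 : 0 ≤ 4*y^2*(y^2 - (1-x)^2) * ((2*x*(1-u))^2 * (1 - x^2 - y^2)^2) := by
      positivity
    have h3 : 0 < (y^2 - (1-x)^2) * (4*x^2) := by positivity
    have h4 : 0 ≤ (y^2 - (1-x)^2) * (4*x^2) *
        (((1-x)^2 - y^2)^2 * ((1 + x^2 + y^2 - 2*x*u)^2 - 4*y^2*(1-u^2))
          - (1 + x^2 - 2*x*u - y^2)^2 * ((1-x)^2 + y^2)^2) := by
      rw [key]; linarith
    have := (mul_nonneg_iff_of_pos_left h3).mp h4
    linarith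

lemma vam_key_ineq (x y u v : ℝ) (hx : 0 ≤ x) (hr : x^2 + y^2 < 1) (huv : u^2 + v^2 = 1) :
    ((1-x)^2 - y^2) * Real.sqrt (((x-u)^2 + (y-v)^2) * ((x-u)^2 + (y+v)^2))
      ≤ ((x-u)^2 + v^2 - y^2) * ((1-x)^2 + y^2) := by
  have hu1 : u ≤ 1 := by nlinarith [sq_nonneg v]
  have hx1 : x < 1 := by nlinarith [sq_nonneg y]
  have hP2 : (0:ℝ) ≤ ((x-u)^2 + (y-v)^2) * ((x-u)^2 + (y+v)^2) := by positivity
  set pq := Real.sqrt (((x-u)^2 + (y-v)^2) * ((x-u)^2 + (y+v)^2)) with hpqdef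
  have hpq0 : 0 ≤ pq := Real.sqrt_nonneg _
  have hpqsq : pq^2 = ((x-u)^2 + (y-v)^2) * ((x-u)^2 + (y+v)^2) := Real.sq_sqrt hP2
  have hP2u : ((x-u)^2 + (y-v)^2) * ((x-u)^2 + (y+v)^2)
      = (1 + x^2 + y^2 - 2*x*u)^2 - 4*y^2*(1-u^2) := by
    linear_combination (2*(x-u)^2 - 2*y^2 + 1 - u^2 + v^2) * huv
  have hNu : (x-u)^2 + v^2 - y^2 = 1 + x^2 - 2*x*u - y^2 := by linear_combination huv
  have hL : 0 < (1-x)^2 + y^2 := by nlinarith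
  have hWnn : 0 ≤ 1 + x^2 + y^2 - 2*x*u := by nlinarith [mul_nonneg hx (sub_nonneg.2 hu1)]
  have hpqW : pq ≤ 1 + x^2 + y^2 - 2*x*u := by
    have h1 : ((x-u)^2 + (y-v)^2) * ((x-u)^2 + (y+v)^2) ≤ (1 + x^2 + y^2 - 2*x*u)^2 := by
      rw [hP2u]; nlinarith [sq_nonneg (y*u), sq_nonneg y]
    calc pq ≤ Real.sqrt ((1 + x^2 + y^2 - 2*x*u)^2) := Real.sqrt_le_sqrt h1
      _ = 1 + x^2 + y^2 - 2*x*u := Real.sqrt_sq hWnn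
  rcases le_or_gt 0 ((1-x)^2 - y^2) with hK | hK
  · have h1 : ((1-x)^2 - y^2) * pq ≤ ((1-x)^2 - y^2) * (1 + x^2 + y^2 - 2*x*u) :=
      mul_le_mul_of_nonneg_left hpqW hK
    have h2 : ((1-x)^2 - y^2) * (1 + x^2 + y^2 - 2*x*u)
        ≤ ((x-u)^2 + v^2 - y^2) * ((1-x)^2 + y^2) := by
      rw [hNu]
      nlinarith [mul_nonneg (sq_nonneg y) (mul_nonneg hx (sub_nonneg.2 hu1)), sq_nonneg y,
        mul_nonneg (mul_nonneg (sq_nonneg y) hx) (sub_nonneg.2 hu1)]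
    linarith
  · rcases le_or_gt 0 ((x-u)^2 + v^2 - y^2) with hN | hN
    · have h1 : ((1-x)^2 - y^2) * pq ≤ 0 := mul_nonpos_of_nonpos_of_nonneg hK.le hpq0
      have h2 : 0 ≤ ((x-u)^2 + v^2 - y^2) * ((1-x)^2 + y^2) := mul_nonneg hN hL.le
      linarith
    · have hNu' : 1 + x^2 - 2*x*u - y^2 < 0 := by rw [← hNu]; exact hN
      have hxpos : 0 < x := by
        rcases hx.eq_or_lt with h0 | h0
        · exfalso; nlinarith
        · exact h0
      have hsq' := vam_sq_ineq x y u hxpos hu1 hr.le hNu'.le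
      have h4 : (((x-u)^2 + v^2 - y^2) * ((1-x)^2 + y^2))^2 ≤ (((1-x)^2 - y^2) * pq)^2 := by
        rw [mul_pow, mul_pow, hpqsq, hP2u, hNu]
        exact hsq'
      have ha : ((x-u)^2 + v^2 - y^2) * ((1-x)^2 + y^2) ≤ 0 :=
        mul_nonpos_of_nonpos_of_nonneg hN.le hL.le
      have hb : ((1-x)^2 - y^2) * pq ≤ 0 := mul_nonpos_of_nonpos_of_nonneg hK.le hpq0
      have h4' : (-(((x-u)^2 + v^2 - y^2) * ((1-x)^2 + y^2)))^2
          ≤ (-(((1-x)^2 - y^2) * pq))^2 := by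
        rw [neg_pow, neg_pow]; simpa using h4
      have h5 := le_of_sq_le_sq h4' (by linarith : (0:ℝ) ≤ -(((1-x)^2 - y^2) * pq))
      linarith

lemma vam_cos_two_arctan (t : ℝ) : Real.cos (2 * Real.arctan t) = (1 - t^2)/(1 + t^2) := by
  rw [Real.cos_two_mul, Real.cos_sq_arctan]
  have h : (0:ℝ) < 1 + t^2 := by positivity
  field_simp
  ring

lemma vam_two_arctan_nonneg (t : ℝ) (ht : 0 ≤ t) : 0 ≤ 2 * Real.arctan t := by
  have : 0 ≤ Real.arctan t := by
    rw [← Real.arctan_zero]; exact Real.arctan_strictMono.monotone ht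
  linarith

lemma vam_two_arctan_le_pi (t : ℝ) : 2 * Real.arctan t ≤ Real.pi := by
  have := Real.arctan_lt_pi_div_two t
  linarith

lemma vam_cos_thetastar (x y : ℝ) (hx1 : x < 1) :
    Real.cos (2 * Real.arctan (|y| / (1-x))) = ((1-x)^2 - y^2)/((1-x)^2 + y^2) := by
  rw [vam_cos_two_arctan]
  have h1x : (0:ℝ) < 1 - x := by linarith
  have hL : (0:ℝ) < (1-x)^2 + y^2 := by nlinarith [sq_nonneg y]
  rw [div_pow, _root_.sq_abs]
  have hne : ((1:ℝ)-x)^2 ≠ 0 := by positivity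
  field_simp

lemma vam_angle_arccos (a z b : ℂ) : EuclideanGeometry.angle a z b
    = Real.arccos (((a.re - z.re)*(b.re - z.re) + (a.im - z.im)*(b.im - z.im))
      / (Real.sqrt ((a.re - z.re)^2 + (a.im - z.im)^2)
          * Real.sqrt ((b.re - z.re)^2 + (b.im - z.im)^2))) := by
  unfold EuclideanGeometry.angle InnerProductGeometry.angle
  simp only [vsub_eq_sub]
  congr 1
  rw [Complex.inner]
  congr 1
  · simp only [Complex.mul_re, Complex.sub_re, Complex.sub_im, Complex.conj_re, Complex.conj_im]
    ring
  · congr 1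
    · rw [Complex.norm_def, Complex.normSq_apply]
      simp only [Complex.sub_re, Complex.sub_im]
      ring_nf
    · rw [Complex.norm_def, Complex.normSq_apply]
      simp only [Complex.sub_re, Complex.sub_im]
      ring_nf

lemma vam_cos_angle (a z b : ℂ) : Real.cos (EuclideanGeometry.angle a z b)
    = ((a.re - z.re)*(b.re - z.re) + (a.im - z.im)*(b.im - z.im))
      / (Real.sqrt ((a.re - z.re)^2 + (a.im - z.im)^2)
          * Real.sqrt ((b.re - z.re)^2 + (b.im - z.im)^2)) := by
  have h : EuclideanGeometry.angle a z b = InnerProductGeometry.angle (a - z) (b - z) := by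
    simp [EuclideanGeometry.angle, vsub_eq_sub]
  rw [h, InnerProductGeometry.cos_angle]
  congr 1
  · rw [Complex.inner]
    simp only [Complex.mul_re, Complex.sub_re, Complex.sub_im, Complex.conj_re, Complex.conj_im]
    ring
  · congr 1
    · rw [Complex.norm_def, Complex.normSq_apply]
      simp only [Complex.sub_re, Complex.sub_im]
      ring_nf
    · rw [Complex.norm_def, Complex.normSq_apply]
      simp only [Complex.sub_re, Complex.sub_im]
      ring_nf

lemma vam_abs_lt (x y : ℝ) (hr : x^2 + y^2 < 1) : ‖((x:ℂ) + y*I)‖ < 1 := by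
  rw [Complex.norm_def, Complex.normSq_apply]
  have h1 : ((x:ℂ) + y*I).re = x := by simp
  have h2 : ((x:ℂ) + y*I).im = y := by simp
  rw [h1, h2, show x*x + y*y = x^2+y^2 by ring]
  calc Real.sqrt (x^2+y^2) < Real.sqrt 1 := Real.sqrt_lt_sqrt (by positivity) hr
    _ = 1 := Real.sqrt_one

set_option maxHeartbeats 1000000 in
lemma vam_angle_le (x y : ℝ) (hx : 0 ≤ x) (hr : x^2 + y^2 < 1) (z : ℂ)
    (hz : ‖z‖ = 1) :
    EuclideanGeometry.angle ((x:ℂ) + y*I) z ((x:ℂ) - y*I) ≤ 2 * Real.arctan (|y| / (1-x)) := by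
  have hx1 : x < 1 := by nlinarith
  have h1x : (0:ℝ) < 1 - x := by linarith
  have huv : z.re^2 + z.im^2 = 1 := by
    have h := Complex.sq_norm z
    rw [hz, Complex.normSq_apply] at h
    nlinarith [h]
  set u := z.re with hu
  set v := z.im with hv
  have ht0 : (0:ℝ) ≤ |y| / (1-x) := by positivity
  have hL : (0:ℝ) < (1-x)^2 + y^2 := by nlinarith [sq_nonneg y]
  -- positivity of the two distances
  have hp : (0:ℝ) < (x-u)^2 + (y-v)^2 := by
    rcases lt_or_ge 0 ((x-u)^2 + (y-v)^2) with h | h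
    · exact h
    · exfalso
      have e1 : (x-u)^2 = 0 := le_antisymm (by nlinarith [sq_nonneg (y-v)]) (sq_nonneg _)
      have e2 : (y-v)^2 = 0 := le_antisymm (by nlinarith [sq_nonneg (x-u)]) (sq_nonneg _)
      have e1' : x = u := by nlinarith [e1]
      have e2' : y = v := by nlinarith [e2]
      rw [← e1', ← e2'] at huv
      linarith
  have hq : (0:ℝ) < (x-u)^2 + (y+v)^2 := by
    rcases lt_or_ge 0 ((x-u)^2 + (y+v)^2) with h | h
    · exact h
    · exfalso
      have e1 : (x-u)^2 = 0 := le_antisymm (by nlinarith [sq_nonneg (y+v)]) (sq_nonneg _)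
      have e2 : (y+v)^2 = 0 := le_antisymm (by nlinarith [sq_nonneg (x-u)]) (sq_nonneg _)
      have e1' : x = u := by nlinarith [e1]
      have e2' : y = -v := by nlinarith [e2]
      rw [← e1'] at huv
      rw [show v = -y by linarith [e2']] at huv
      nlinarith [huv]
  have hpq : (0:ℝ) < Real.sqrt ((x-u)^2 + (y-v)^2) * Real.sqrt ((x-u)^2 + (y+v)^2) :=
    mul_pos (Real.sqrt_pos.mpr hp) (Real.sqrt_pos.mpr hq)
  -- cosine of the angle
  have hcos : Real.cos (EuclideanGeometry.angle ((x:ℂ) + y*I) z ((x:ℂ) - y*I))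
      = ((x-u)^2 + v^2 - y^2)
        / (Real.sqrt ((x-u)^2 + (y-v)^2) * Real.sqrt ((x-u)^2 + (y+v)^2)) := by
    rw [vam_cos_angle]
    have hre1 : ((x:ℂ) + y*I).re = x := by simp
    have him1 : ((x:ℂ) + y*I).im = y := by simp
    have hre2 : ((x:ℂ) - y*I).re = x := by simp
    have him2 : ((x:ℂ) - y*I).im = -y := by simp
    rw [hre1, him1, hre2, him2, ← hu, ← hv]
    congr 1
    · ring
    · congr 1
      congr 1
      ring
  -- compare cosines
  have hkey := vam_key_ineq x y u v hx hr huv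
  have hcosle : Real.cos (2 * Real.arctan (|y| / (1-x)))
      ≤ Real.cos (EuclideanGeometry.angle ((x:ℂ) + y*I) z ((x:ℂ) - y*I)) := by
    rw [hcos, vam_cos_thetastar x y hx1]
    rw [div_le_div_iff₀ hL hpq]
    calc ((1-x)^2 - y^2) * (Real.sqrt ((x-u)^2 + (y-v)^2) * Real.sqrt ((x-u)^2 + (y+v)^2))
        = ((1-x)^2 - y^2) * Real.sqrt (((x-u)^2 + (y-v)^2) * ((x-u)^2 + (y+v)^2)) := by
          rw [← Real.sqrt_mul hp.le]
      _ ≤ ((x-u)^2 + v^2 - y^2) * ((1-x)^2 + y^2) := hkey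
  by_contra hlt
  push_neg at hlt
  have hmono := Real.strictAntiOn_cos
    ⟨vam_two_arctan_nonneg _ ht0, vam_two_arctan_le_pi _⟩
    ⟨EuclideanGeometry.angle_nonneg _ _ _, EuclideanGeometry.angle_le_pi _ _ _⟩ hlt
  linarith

lemma vam_angle_one (x y : ℝ) (hx : 0 ≤ x) (hr : x^2 + y^2 < 1) :
    EuclideanGeometry.angle ((x:ℂ) + y*I) 1 ((x:ℂ) - y*I) = 2 * Real.arctan (|y| / (1-x)) := by
  have hx1 : x < 1 := by nlinarith
  have h1x : (0:ℝ) < 1 - x := by linarith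
  have hL : (0:ℝ) < (1-x)^2 + y^2 := by nlinarith [sq_nonneg y]
  have ht0 : (0:ℝ) ≤ |y| / (1-x) := by positivity
  have hang : EuclideanGeometry.angle ((x:ℂ) + y*I) 1 ((x:ℂ) - y*I)
      = Real.arccos (((1-x)^2 - y^2) / ((1-x)^2 + y^2)) := by
    rw [vam_angle_arccos]
    have hre1 : ((x:ℂ) + y*I).re = x := by simp
    have him1 : ((x:ℂ) + y*I).im = y := by simp
    have hre2 : ((x:ℂ) - y*I).re = x := by simp
    have him2 : ((x:ℂ) - y*I).im = -y := by simp
    have hre3 : (1:ℂ).re = 1 := by simp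
    have him3 : (1:ℂ).im = 0 := by simp
    rw [hre1, him1, hre2, him2, hre3, him3]
    congr 1
    have hs1 : Real.sqrt ((x - 1)^2 + (y - 0)^2) = Real.sqrt ((1-x)^2 + y^2) := by
      congr 1; ring
    have hs2 : Real.sqrt ((x - 1)^2 + (-y - 0)^2) = Real.sqrt ((1-x)^2 + y^2) := by
      congr 1; ring
    rw [hs1, hs2, Real.mul_self_sqrt hL.le]
    congr 1
    ring
  rw [hang, ← vam_cos_thetastar x y hx1,
    Real.arccos_cos (vam_two_arctan_nonneg _ ht0) (vam_two_arctan_le_pi _)]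


lemma vam_angle_rot (w : ℂ) (hw : ‖w‖ = 1) (a z b : ℂ) :
    EuclideanGeometry.angle (w*a) (w*z) (w*b) = EuclideanGeometry.angle a z b := by
  have hww : (starRingEnd ℂ) w * w = 1 := by
    rw [mul_comm, Complex.mul_conj]
    norm_cast
    rw [Complex.normSq_eq_norm_sq, hw]
    norm_num
  unfold EuclideanGeometry.angle InnerProductGeometry.angle
  simp only [vsub_eq_sub]
  have e1 : w*a - w*z = w*(a-z) := by ring
  have e2 : w*b - w*z = w*(b-z) := by ring
  rw [e1, e2]
  congr 1
  rw [Complex.inner, Complex.inner]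
  rw [show (w*(b-z)) * (starRingEnd ℂ) (w*(a-z))
      = ((starRingEnd ℂ) w * w) * ((b-z) * (starRingEnd ℂ) (a-z)) from by
    rw [map_mul]; ring]
  rw [hww, one_mul, norm_mul, norm_mul, hw, one_mul, one_mul]

lemma vam_set_rot (w : ℂ) (hw : ‖w‖ = 1) (a b : ℂ) :
    {θ : ℝ | ∃ z : ℂ, ‖z‖ = 1 ∧ θ = EuclideanGeometry.angle a z b}
      = {θ : ℝ | ∃ z : ℂ, ‖z‖ = 1 ∧ θ = EuclideanGeometry.angle (w*a) z (w*b)} := by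
  have hww : w * (starRingEnd ℂ) w = 1 := by
    rw [Complex.mul_conj]
    norm_cast
    rw [Complex.normSq_eq_norm_sq, hw]
    norm_num
  ext θ
  constructor
  · rintro ⟨z, hz, rfl⟩
    exact ⟨w*z, by rw [norm_mul, hw, hz, one_mul], (vam_angle_rot w hw a z b).symm⟩
  · rintro ⟨z, hz, rfl⟩
    refine ⟨(starRingEnd ℂ) w * z, by rw [norm_mul, Complex.norm_conj, hw, hz, one_mul], ?_⟩
    rw [← vam_angle_rot w hw a ((starRingEnd ℂ) w * z) b]
    rw [show w * ((starRingEnd ℂ) w * z) = z from by rw [← mul_assoc, hww, one_mul]]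

theorem vam_equal_moduli (a b : ℂ) (ha : ‖a‖ < 1) (hb : ‖b‖ < 1)
    (hab : a ≠ b) (heq : ‖a‖ = ‖b‖) :
    vam a b = 2 * Real.arctan (‖a - b‖ / (2 - ‖a + b‖)) := by
  have hane : a ≠ 0 := by
    intro h
    apply hab
    rw [h] at heq ⊢
    have hb0 : ‖b‖ = 0 := by simpa using heq.symm
    exact (norm_eq_zero.mp hb0).symm
  obtain ⟨w, hw, hwb, hwre⟩ :
      ∃ w : ℂ, ‖w‖ = 1 ∧ w*b = (starRingEnd ℂ) (w*a) ∧ 0 ≤ (w*a).re := by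
    by_cases hs : a + b = 0
    · have hb' : b = -a := by linear_combination hs
      have hr0 : (0:ℝ) < ‖a‖ := norm_pos_iff.mpr hane
      have h1 : (starRingEnd ℂ) a * a = ((‖a‖ : ℝ) : ℂ) * ((‖a‖ : ℝ) : ℂ) := by
        rw [mul_comm, Complex.mul_conj, Complex.normSq_eq_norm_sq]
        push_cast
        ring
      have hwa : Complex.I * (starRingEnd ℂ) a / (‖a‖ : ℂ) * a
          = Complex.I * (‖a‖ : ℂ) := by
        have hrne : ((‖a‖ : ℝ) : ℂ) ≠ 0 := by
          norm_cast
          exact hr0.ne'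
        field_simp
        linear_combination h1
      refine ⟨Complex.I * (starRingEnd ℂ) a / (‖a‖ : ℂ), ?_, ?_, ?_⟩
      · rw [norm_div, norm_mul, Complex.norm_I, Complex.norm_conj, one_mul, Complex.norm_real,
          Real.norm_eq_abs, abs_of_pos hr0, div_self hr0.ne']
      · rw [hb', mul_neg, hwa, map_mul, Complex.conj_I, Complex.conj_ofReal]
        ring
      · rw [hwa]
        simp
    · have hs0 : (0:ℝ) < ‖a+b‖ := norm_pos_iff.mpr hs
      set s : ℝ := ‖a+b‖ with hsdef
      have h1 : (starRingEnd ℂ) (a+b) * (a+b) = ((s : ℝ) : ℂ) * ((s : ℝ) : ℂ) := by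
        rw [mul_comm, Complex.mul_conj, Complex.normSq_eq_norm_sq]
        push_cast
        ring
      set w : ℂ := (starRingEnd ℂ) (a+b) / (s : ℂ) with hwdef
      have hw1 : ‖w‖ = 1 := by
        rw [hwdef, norm_div, Complex.norm_conj, Complex.norm_real, Real.norm_eq_abs, abs_of_pos hs0, ← hsdef,
          div_self hs0.ne']
      have hrne : ((s : ℝ) : ℂ) ≠ 0 := by
        norm_cast
        exact hs0.ne'
      have hsum : w*a + w*b = (s:ℂ) := by
        have e : w*a + w*b = ((starRingEnd ℂ) (a+b) * (a+b))/(s:ℂ) := by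
          rw [hwdef]
          ring
        rw [e, h1, mul_div_assoc, div_self hrne, mul_one]
      have habs' : ‖w*a‖ = ‖w*b‖ := by
        rw [norm_mul, norm_mul, heq]
      have hre : (w*a).re + (w*b).re = s := by
        rw [← Complex.add_re, hsum, Complex.ofReal_re]
      have him : (w*a).im + (w*b).im = 0 := by
        rw [← Complex.add_im, hsum, Complex.ofReal_im]
      have hns : (w*a).re*(w*a).re + (w*a).im*(w*a).im
          = (w*b).re*(w*b).re + (w*b).im*(w*b).im := by
        have h2 : Complex.normSq (w*a) = Complex.normSq (w*b) := by
          rw [Complex.normSq_eq_norm_sq, Complex.normSq_eq_norm_sq, habs']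
        rw [Complex.normSq_apply, Complex.normSq_apply] at h2
        exact h2
      have h3 : s*(2*(w*a).re - s) = 0 := by
        linear_combination ((w*b).re + s - (w*a).re) * hre + ((w*b).im - (w*a).im) * him + hns
      have hre2 : (w*a).re = s/2 := by
        rcases mul_eq_zero.mp h3 with h | h
        · exact absurd h hs0.ne'
        · linarith
      refine ⟨w, hw1, ?_, ?_⟩
      · apply Complex.ext
        · rw [Complex.conj_re]
          linarith
        · rw [Complex.conj_im]
          linarith
      · rw [hre2]
        positivity
  -- now the reduction
  have hwne : ‖w*a‖ = ‖a‖ := by rw [norm_mul, hw, one_mul]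
  set x : ℝ := (w*a).re with hxdef
  set y : ℝ := (w*a).im with hydef
  have hxy : x^2 + y^2 < 1 := by
    have h2 : x^2 + y^2 = (‖w*a‖)^2 := by
      rw [Complex.sq_norm, Complex.normSq_apply]
      ring
    rw [hwne] at h2
    nlinarith [h2, norm_nonneg a]
  have hy : y ≠ 0 := by
    intro h0
    apply hab
    have hwab : w*a = w*b := by
      rw [hwb]
      apply Complex.ext
      · rw [Complex.conj_re]
      · rw [Complex.conj_im, ← hydef, h0]
        norm_num
    have hw0 : w ≠ 0 := by
      intro h
      rw [h] at hw
      simp at hw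
    exact mul_left_cancel₀ hw0 hwab
  have e1 : w*a = (x:ℂ) + y*I := (Complex.re_add_im (w*a)).symm
  have e2 : w*b = (x:ℂ) - y*I := by
    rw [hwb, e1]
    apply Complex.ext <;> simp
  have hg : IsGreatest {θ : ℝ | ∃ z : ℂ, ‖z‖ = 1 ∧
      θ = EuclideanGeometry.angle (w*a) z (w*b)} (2 * Real.arctan (|y| / (1-x))) := by
    constructor
    · refine ⟨1, by simp, ?_⟩
      rw [e1, e2, vam_angle_one x y hwre hxy]
    · rintro θ ⟨z, hz, rfl⟩
      rw [e1, e2]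
      exact vam_angle_le x y hwre hxy z hz
  unfold vam
  rw [vam_set_rot w hw a b, hg.csSup_eq]
  have hab' : ‖a-b‖ = 2*|y| := by
    calc ‖a-b‖ = ‖w*(a-b)‖ := by rw [norm_mul, hw, one_mul]
      _ = ‖((2*y : ℝ) : ℂ)*I‖ := by
          rw [show w*(a-b) = w*a - w*b from by ring, e1, e2,
            show (x:ℂ) + y*I - ((x:ℂ) - y*I) = ((2*y : ℝ) : ℂ)*I from by push_cast; ring]
      _ = 2*|y| := by
          rw [norm_mul, Complex.norm_I, mul_one, Complex.norm_real, Real.norm_eq_abs, abs_mul]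
          norm_num
  have hab2 : ‖a+b‖ = 2*x := by
    calc ‖a+b‖ = ‖w*(a+b)‖ := by rw [norm_mul, hw, one_mul]
      _ = ‖((2*x : ℝ) : ℂ)‖ := by
          rw [show w*(a+b) = w*a + w*b from by ring, e1, e2,
            show (x:ℂ) + y*I + ((x:ℂ) - y*I) = ((2*x : ℝ) : ℂ) from by push_cast; ring]
      _ = 2*x := by
          rw [Complex.norm_real, Real.norm_eq_abs, _root_.abs_of_nonneg (by linarith : (0:ℝ) ≤ 2*x)]
  rw [hab', hab2, show (2:ℝ) - 2*x = 2*(1-x) from by ring,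
    mul_div_mul_left _ _ (two_ne_zero)]
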